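/- Let T be a triangulated category with coproducts, and let T be a pure-projective silting object of T (meaning the natural map Hom_T(T, Y) → Hom(yT, yY) is bijective for every Y, where y is restricted Yoneda into Mod-T^c over the compact objects). Then the silting t-structure (T^{⊥>0}, T^{⊥≤0}) is smashing: the coaisle T^{⊥≤0} is closed under coproducts taken in T. -/

import Mathlib

open CategoryTheory Limits Pretriangulated

universe v u

variable {C : Type u} [Category.{v} C] [Preadditive C] [HasZeroObject C] [HasShift C ℤ]
  [∀ n : ℤ, (shiftFunctor C n).Additive] [Pretriangulated C]


/-- `X` is a direct summand (retract) of `Y`. -/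
def IsSummand {C : Type u} [Category.{v} C] (X Y : C) : Prop :=
  ∃ (i : X ⟶ Y) (r : Y ⟶ X), i ≫ r = 𝟙 X

/-- An object `K` is compact if `Hom(K, -)` preserves all set-indexed coproducts. -/
def IsCompactObj (K : C) : Prop :=
  ∀ I : Type v, Nonempty (PreservesColimitsOfShape (Discrete I)
    (preadditiveCoyoneda.obj (Opposite.op K)))

/-- The restricted Yoneda functor `y : T ⥤ Mod-T^c`, sending `X` to the restriction of
`Hom_T(-, X)` to the subcategory `Tc` of compact objects. -/
def restrictedYoneda (Tc : Set C) :
    C ⥤ ((ObjectProperty.FullSubcategory fun X : C => X ∈ Tc)ᵒᵖ ⥤ AddCommGrpCat.{v}) :=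
  preadditiveYoneda ⋙ (Functor.whiskeringLeft _ _ _).obj (ObjectProperty.ι fun X : C => X ∈ Tc).op
/-- A torsion pair `(𝒰, 𝒱)` in a triangulated category: both classes are closed under
direct summands, all morphisms from `𝒰` to `𝒱` vanish, and every object fits
in a triangle `U ⟶ X ⟶ V ⟶ U⟦1⟧` with `U ∈ 𝒰` and `V ∈ 𝒱`. -/
structure TorsionPair (𝒰 𝒱 : Set C) : Prop where
  summand_left : ∀ ⦃X Y : C⦄, IsSummand X Y → Y ∈ 𝒰 → X ∈ 𝒰
  summand_right : ∀ ⦃X Y : C⦄, IsSummand X Y → Y ∈ 𝒱 → X ∈ 𝒱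
  hom_zero : ∀ ⦃X Y : C⦄, X ∈ 𝒰 → Y ∈ 𝒱 → ∀ f : X ⟶ Y, f = 0
  exists_triangle : ∀ X : C, ∃ (U V : C) (_ : U ∈ 𝒰) (_ : V ∈ 𝒱)
    (f : U ⟶ X) (g : X ⟶ V) (h : V ⟶ U⟦(1 : ℤ)⟧), Triangle.mk f g h ∈ distTriang C


/-- `M^{⊥>0}`: objects `Y` with `Hom(M, Y[i]) = 0` for all `i > 0`. -/
def rightPerpGT (M : C) : Set C := {Y : C | ∀ i : ℤ, 0 < i → ∀ f : M ⟶ Y⟦i⟧, f = 0}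

/-- `M^{⊥≤0}`: objects `Y` with `Hom(M, Y[i]) = 0` for all `i ≤ 0`. -/
def rightPerpLE (M : C) : Set C := {Y : C | ∀ i : ℤ, i ≤ 0 → ∀ f : M ⟶ Y⟦i⟧, f = 0}

/-- `M` is silting if `(M^{⊥>0}, M^{⊥≤0})` is a t-structure and `M ∈ M^{⊥>0}`. -/
def IsSilting (M : C) : Prop :=
  TorsionPair (rightPerpGT M) (rightPerpLE M) ∧
    (∀ X ∈ rightPerpGT M, X⟦(1 : ℤ)⟧ ∈ rightPerpGT M) ∧ M ∈ rightPerpGT M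


section SmashingAux

open Opposite

variable {I : Type v} [DecidableEq I] {Z : I → C}

/-- Post-composition with a morphism, as an additive map on hom groups. -/
def postcompAddHom {K A B : C} (φ : A ⟶ B) : (K ⟶ A) →+ (K ⟶ B) :=
  AddMonoidHom.mk' (fun g => g ≫ φ) fun _ _ => Preadditive.add_comp _ _ _ _ _ _

/-- The cofan on the direct sum of the hom groups `K ⟶ Z j`. -/
noncomputable def dfCofan (K : C) :
    Cocone (Discrete.functor Z ⋙ preadditiveCoyoneda.obj (op K)) where
  pt := AddCommGrpCat.of (Π₀ j, (K ⟶ Z j))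
  ι := Discrete.natTrans fun j =>
    AddCommGrpCat.ofHom (DFinsupp.singleAddHom (fun j => K ⟶ Z j) j.as)

/-- For `K` compact, the decomposition of `Hom(K, ∐ Z)` as a direct sum. -/
noncomputable def theta (c : Cocone (Discrete.functor Z)) {K : C}
    (hK : PreservesColimitsOfShape (Discrete I) (preadditiveCoyoneda.obj (op K)))
    (hc : IsColimit c) : (K ⟶ c.pt) →+ Π₀ j, (K ⟶ Z j) :=
  letI := hK
  ((isColimitOfPreserves (preadditiveCoyoneda.obj (op K)) hc).desc (dfCofan K)).hom

theorem theta_single (c : Cocone (Discrete.functor Z)) {K : C}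
    (hK : PreservesColimitsOfShape (Discrete I) (preadditiveCoyoneda.obj (op K)))
    (hc : IsColimit c) (j : I) (h : K ⟶ Z j) :
    theta c hK hc (h ≫ c.ι.app ⟨j⟩) = DFinsupp.single j h := by
  letI := hK
  exact congrArg (fun f => f.hom h)
    ((isColimitOfPreserves (preadditiveCoyoneda.obj (op K)) hc).fac (dfCofan K) ⟨j⟩)

theorem sum_theta (c : Cocone (Discrete.functor Z)) {K : C}
    (hK : PreservesColimitsOfShape (Discrete I) (preadditiveCoyoneda.obj (op K)))
    (hc : IsColimit c) (x : K ⟶ c.pt) :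
    DFinsupp.sumAddHom (fun j => postcompAddHom (K := K) (c.ι.app ⟨j⟩)) (theta c hK hc x)
      = x := by
  letI := hK
  have : AddCommGrpCat.ofHom
      ((DFinsupp.sumAddHom (fun j => postcompAddHom (K := K) (c.ι.app ⟨j⟩))).comp
        (theta c hK hc)) = 𝟙 ((preadditiveCoyoneda.obj (op K)).obj c.pt) := by
    apply (isColimitOfPreserves (preadditiveCoyoneda.obj (op K)) hc).hom_ext
    rintro ⟨j⟩
    ext (h : K ⟶ Z j)
    show DFinsupp.sumAddHom _ (theta c hK hc (h ≫ c.ι.app ⟨j⟩)) = h ≫ c.ι.app ⟨j⟩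
    rw [theta_single c hK hc j h, DFinsupp.sumAddHom_single]
    rfl
  exact congrArg (fun f => f.hom x) this

theorem theta_natural (c : Cocone (Discrete.functor Z)) {K K' : C}
    (hK : PreservesColimitsOfShape (Discrete I) (preadditiveCoyoneda.obj (op K)))
    (hK' : PreservesColimitsOfShape (Discrete I) (preadditiveCoyoneda.obj (op K')))
    (hc : IsColimit c) (g : K' ⟶ K) (x : K ⟶ c.pt) :
    theta c hK' hc (g ≫ x) =
      DFinsupp.mapRange.addMonoidHom
        (fun j => AddMonoidHom.mk' (fun h : K ⟶ Z j => g ≫ h)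
          (fun _ _ => Preadditive.comp_add _ _ _ _ _ _)) (theta c hK hc x) := by
  letI := hK
  have : AddCommGrpCat.ofHom ((theta c hK' hc).comp (AddMonoidHom.mk'
        (fun x : K ⟶ c.pt => g ≫ x) (fun _ _ => Preadditive.comp_add _ _ _ _ _ _))) =
      AddCommGrpCat.ofHom ((DFinsupp.mapRange.addMonoidHom
        (fun j => AddMonoidHom.mk' (fun h : K ⟶ Z j => g ≫ h)
          (fun _ _ => Preadditive.comp_add _ _ _ _ _ _))).comp (theta c hK hc)) := by
    apply (isColimitOfPreserves (preadditiveCoyoneda.obj (op K)) hc).hom_ext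
    rintro ⟨j⟩
    ext (h : K ⟶ Z j) : 2
    show theta c hK' hc (g ≫ (h ≫ c.ι.app ⟨j⟩)) =
      DFinsupp.mapRange.addMonoidHom _ (theta c hK hc (h ≫ c.ι.app ⟨j⟩))
    rw [theta_single c hK hc j h, ← Category.assoc, theta_single c hK' hc j (g ≫ h)]
    rw [DFinsupp.mapRange.addMonoidHom_apply, DFinsupp.mapRange_single]
    rfl
  exact congrArg (fun f => f.hom x) this

end SmashingAux

/-- If `M` is a pure-projective silting object of a compactly generated triangulated
category, then the silting t-structure is smashing: the coaisle `M^{⊥≤0}` is closed under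
coproducts taken in `T`. -/
theorem stmt17 [HasCoproducts.{v} C]
    (Tc : Set C) (hsmall : EssentiallySmall.{v} (ObjectProperty.FullSubcategory fun X : C => X ∈ Tc))
    (hcompact : ∀ K ∈ Tc, IsCompactObj K)
    (hgen : ∀ Y : C, (∀ K ∈ Tc, ∀ f : K ⟶ Y, f = 0) → IsZero Y)
    (M : C) (hM : IsSilting M)
    (hpp : ∀ Y : C, Function.Bijective fun φ : M ⟶ Y => (restrictedYoneda Tc).map φ)
    {I : Type v} (X : I → C) (hX : ∀ i, X i ∈ rightPerpLE M) :
    (∐ X) ∈ rightPerpLE M := by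
  classical
  intro i hi f
  set Z : I → C := fun j => (X j)⟦i⟧ with hZdef
  have cmpIso : IsIso (sigmaComparison (shiftFunctor C i) X) := inferInstance
  set f' : M ⟶ ∐ Z := f ≫ inv (sigmaComparison (shiftFunctor C i) X) with hf'def
  set c : Cocone (Discrete.functor Z) := colimit.cocone (Discrete.functor Z) with hcdef
  have hc : IsColimit c := colimit.isColimit _
  have hK : ∀ K : ObjectProperty.FullSubcategory fun X : C => X ∈ Tc,
      PreservesColimitsOfShape (Discrete I) (preadditiveCoyoneda.obj (Opposite.op K.obj)) :=
    fun K => (hcompact K.obj K.property I).some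
  -- step 1: each component of `θ (g ≫ f')` vanishes, by pure-projectivity of `M`
  have key : ∀ (j : I) (K : ObjectProperty.FullSubcategory fun X : C => X ∈ Tc) (g : K.obj ⟶ M),
      theta c (hK K) hc (g ≫ f') j = 0 := by
    intro j
    let τ : (restrictedYoneda Tc).obj M ⟶ (restrictedYoneda Tc).obj (Z j) :=
      { app := fun K => AddCommGrpCat.ofHom
          (AddMonoidHom.mk'
            (fun g : K.unop.obj ⟶ M => theta c (hK K.unop) hc (g ≫ f') j)
            (fun (a b : K.unop.obj ⟶ M) => by
              show theta c (hK K.unop) hc ((a + b) ≫ f') j =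
                theta c (hK K.unop) hc (a ≫ f') j + theta c (hK K.unop) hc (b ≫ f') j
              rw [Preadditive.add_comp, map_add, DFinsupp.add_apply]))
        naturality := by
          intro A B ψ
          ext (g : A.unop.obj ⟶ M)
          show theta c (hK B.unop) hc
              (((ObjectProperty.ι fun X : C => X ∈ Tc).map ψ.unop ≫ g) ≫ f') j =
            (ObjectProperty.ι fun X : C => X ∈ Tc).map ψ.unop ≫ theta c (hK A.unop) hc (g ≫ f') j
          rw [Category.assoc, theta_natural c (hK A.unop) (hK B.unop) hc
              ((ObjectProperty.ι fun X : C => X ∈ Tc).map ψ.unop) (g ≫ f'),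
            DFinsupp.mapRange.addMonoidHom_apply, DFinsupp.mapRange_apply]
          rfl }
    obtain ⟨fj, hfj⟩ := (hpp (Z j)).2 τ
    have hfj0 : fj = 0 := hX j i hi fj
    intro K g
    have : τ.app (Opposite.op K) g = g ≫ fj := by
      rw [← hfj]; rfl
    rw [hfj0, Limits.comp_zero] at this
    exact this
  -- step 2: `g ≫ f' = 0` for all morphisms `g` from compact objects
  have hgf' : ∀ (K : ObjectProperty.FullSubcategory fun X : C => X ∈ Tc) (g : K.obj ⟶ M), g ≫ f' = 0 := by
    intro K g
    have h0 : theta c (hK K) hc (g ≫ f') = 0 := by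
      ext j; exact key j K g
    have hs := sum_theta c (hK K) hc (g ≫ f')
    rw [h0, map_zero] at hs
    exact hs.symm
  -- step 3: `y f' = y 0`, hence `f' = 0` by pure-projectivity
  have hy : (restrictedYoneda Tc).map f' = (restrictedYoneda Tc).map (0 : M ⟶ ∐ Z) := by
    apply NatTrans.ext
    funext K
    ext (g : K.unop.obj ⟶ M)
    show g ≫ f' = g ≫ (0 : M ⟶ ∐ Z)
    rw [Limits.comp_zero]
    exact hgf' K.unop g
  have hf'0 : f' = 0 := (hpp (∐ Z)).1 hy
  have : f = f' ≫ sigmaComparison (shiftFunctor C i) X := by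
    rw [hf'def, Category.assoc, IsIso.inv_hom_id, Category.comp_id]
  rw [this, hf'0, Limits.zero_comp]
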